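/- Let $n\ge 1$, $1<p\le q<\infty$, and $\alpha,\beta\in\mathbb{R}$ with $\alpha<n(p-1)$ and $q(\alpha+n)-p(\beta+n)=pqn$. Then there exists $C<\infty$ such that for all nonnegative measurable $u$ on $\mathbb{R}^n$, $\left(\int_{\mathbb{R}^n}\left(\int_{|y|<|x|} u(y)\,dy\right)^q |x|^{\beta}\,dx\right)^{1/q} \le C\left(\int_{\mathbb{R}^n} u(x)^p |x|^{\alpha}\,dx\right)^{1/p}$. -/

import Mathlib

open MeasureTheory Set Metric

noncomputable def e2 (t : ℝ) : ENNReal := (2:ENNReal) ^ t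

lemma e2_ne_zero (t : ℝ) : e2 t ≠ 0 := by
  simp [e2, ENNReal.rpow_eq_zero_iff]

lemma e2_ne_top (t : ℝ) : e2 t ≠ ⊤ := by
  simp [e2, ENNReal.rpow_eq_top_iff]

lemma e2_add (s t : ℝ) : e2 (s + t) = e2 s * e2 t :=
  ENNReal.rpow_add _ _ two_ne_zero (by simp)

lemma e2_rpow (s t : ℝ) : (e2 s) ^ t = e2 (s * t) := (ENNReal.rpow_mul 2 s t).symm

lemma ofReal_two_rpow (t : ℝ) : ENNReal.ofReal ((2:ℝ) ^ t) = e2 t := by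
  rw [e2, ← ENNReal.ofReal_rpow_of_pos two_pos]
  norm_num

lemma one_le_e2 {t : ℝ} (h : 0 ≤ t) : 1 ≤ e2 t := by
  have := ENNReal.rpow_le_rpow_of_exponent_le (x := 2) one_le_two h
  simpa [e2] using this

lemma e2_lt_one {t : ℝ} (h : t < 0) : e2 t < 1 := by
  have := ENNReal.rpow_lt_rpow_of_exponent_lt (x := 2) (y := t) (z := 0)
    (by norm_num) (by norm_num) h
  simpa [e2] using this

lemma e2_mono {s t : ℝ} (h : s ≤ t) : e2 s ≤ e2 t :=
  ENNReal.rpow_le_rpow_of_exponent_le one_le_two h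

lemma tsum_e2_ne_top {τ : ℝ} (hτ : τ < 0) : ∑' j : ℕ, e2 (j * τ) ≠ ⊤ := by
  have h1 : ∀ j : ℕ, e2 (j * τ) = (e2 τ) ^ (j : ℕ) := by
    intro j
    rw [← ENNReal.rpow_natCast (e2 τ) j, e2_rpow, mul_comm]
  rw [tsum_congr h1, ENNReal.tsum_geometric]
  exact ENNReal.inv_ne_top.2 (tsub_pos_of_lt (e2_lt_one hτ)).ne'

lemma tsum_holder {r s : ℝ} (h : r.HolderConjugate s) (f g : ℕ → ENNReal) :
    ∑' j, f j * g j ≤ (∑' j, f j ^ r) ^ (1/r) * (∑' j, g j ^ s) ^ (1/s) := by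
  have := ENNReal.lintegral_mul_le_Lp_mul_Lq (Measure.count (α := ℕ)) h
    (f := f) (g := g) Measurable.of_discrete.aemeasurable Measurable.of_discrete.aemeasurable
  simpa [lintegral_count] using this

lemma tsum_rpow_le {ι : Type*} [Countable ι] {s : ℝ} (hs : 1 ≤ s) (f : ι → ENNReal) :
    ∑' i, f i ^ s ≤ (∑' i, f i) ^ s := by
  have hs0 : 0 < s := lt_of_lt_of_le one_pos hs
  by_cases hS : ∑' i, f i = ⊤
  · rw [hS, ENNReal.top_rpow_of_pos hs0]; exact le_top
  · have hb : ∀ i, f i ^ s ≤ (∑' i, f i) ^ (s - 1) * f i := by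
      intro i
      by_cases h0 : f i = 0
      · simp [h0, ENNReal.zero_rpow_of_pos hs0]
      · have hfi : f i ≤ ∑' i, f i := ENNReal.le_tsum i
        have hft : f i ≠ ⊤ := fun ht => hS (top_le_iff.1 (ht ▸ hfi))
        calc f i ^ s = f i ^ ((s - 1) + 1) := by ring_nf
          _ = f i ^ (s - 1) * f i := by rw [ENNReal.rpow_add _ _ h0 hft, ENNReal.rpow_one]
          _ ≤ (∑' i, f i) ^ (s - 1) * f i :=
              mul_le_mul_left (ENNReal.rpow_le_rpow hfi (by linarith)) _
    calc ∑' i, f i ^ s ≤ ∑' i, (∑' i, f i) ^ (s - 1) * f i := ENNReal.tsum_le_tsum hb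
      _ = (∑' i, f i) ^ (s - 1) * ∑' i, f i := ENNReal.tsum_mul_left
      _ ≤ (∑' i, f i) ^ s := by
          by_cases hz : ∑' i, f i = 0
          · simp [hz]
          · apply le_of_eq
            calc (∑' i, f i) ^ (s - 1) * ∑' i, f i
                = (∑' i, f i) ^ (s - 1) * (∑' i, f i) ^ (1:ℝ) := by rw [ENNReal.rpow_one]
              _ = (∑' i, f i) ^ ((s - 1) + 1) := (ENNReal.rpow_add _ _ hz hS).symm
              _ = (∑' i, f i) ^ s := by norm_num


lemma jensen_aux {s δ : ℝ} (hs : 1 ≤ s) (hδ : 0 < δ) :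
    ∃ K : ENNReal, K ≠ ⊤ ∧ ∀ c : ℕ → ENNReal,
      (∑' j, c j) ^ s ≤ K * ∑' j, (c j) ^ s * e2 (j * δ) := by
  rcases eq_or_lt_of_le hs with h1 | h1
  · refine ⟨1, ENNReal.one_ne_top, fun c => ?_⟩
    subst h1
    simp only [ENNReal.rpow_one, one_mul]
    exact ENNReal.tsum_le_tsum fun j =>
      le_mul_of_one_le_right' (one_le_e2 (by positivity))
  · have hs0 : s ≠ 0 := by linarith
    have hconj : s.HolderConjugate (s / (s - 1)) := Real.HolderConjugate.conjExponent h1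
    set τ : ℝ := (-(δ/s)) * (s / (s-1)) with hτdef
    have hτ : τ < 0 := mul_neg_of_neg_of_pos (neg_lt_zero.2 (by positivity))
      (div_pos (by linarith) (by linarith))
    set G := ∑' j : ℕ, e2 (j * τ) with hG
    have hGt : G ≠ ⊤ := tsum_e2_ne_top hτ
    refine ⟨G ^ (s - 1), ENNReal.rpow_ne_top_of_nonneg (by linarith) hGt, fun c => ?_⟩
    have key : ∑' j, c j ≤ (∑' j, (c j) ^ s * e2 (j * δ)) ^ (1/s) * G ^ (1/(s/(s-1))) := by
      have hpt : ∀ j : ℕ, c j = (c j * e2 (j * (δ/s))) * e2 (j * (-(δ/s))) := by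
        intro j
        have h0 : (j:ℝ) * (δ/s) + (j:ℝ) * (-(δ/s)) = 0 := by ring
        rw [mul_assoc, ← e2_add, h0]
        simp [e2]
      calc ∑' j, c j = ∑' j, (c j * e2 (j * (δ/s))) * e2 (j * (-(δ/s))) := tsum_congr hpt
        _ ≤ (∑' (j : ℕ), (c j * e2 (j * (δ/s))) ^ s) ^ (1/s)
              * (∑' (j : ℕ), (e2 (j * (-(δ/s)))) ^ (s/(s-1))) ^ (1/(s/(s-1))) :=
            tsum_holder hconj _ _
        _ = (∑' j, (c j) ^ s * e2 (j * δ)) ^ (1/s) * G ^ (1/(s/(s-1))) := by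
            congr 1
            · congr 1
              refine tsum_congr fun j => ?_
              rw [ENNReal.mul_rpow_of_nonneg _ _ (by linarith), e2_rpow]
              congr 2
              field_simp
            · rw [hG]
              congr 1
              refine tsum_congr fun j => ?_
              rw [e2_rpow]
              congr 1
              rw [hτdef]; ring
    calc (∑' j, c j) ^ s
        ≤ ((∑' j, (c j) ^ s * e2 (j * δ)) ^ (1/s) * G ^ (1/(s/(s-1)))) ^ s :=
          ENNReal.rpow_le_rpow key (by linarith)
      _ = G ^ (s - 1) * ∑' j, (c j) ^ s * e2 (j * δ) := by
          have e1 : 1/s * s = 1 := one_div_mul_cancel hs0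
          have e2' : (1/(s/(s-1))) * s = s - 1 := by
            field_simp
          rw [ENNReal.mul_rpow_of_nonneg _ _ (by linarith : (0:ℝ) ≤ s),
            ← ENNReal.rpow_mul, ← ENNReal.rpow_mul, e1, e2', ENNReal.rpow_one, mul_comm]

def Shell (n : ℕ) (k : ℤ) : Set (EuclideanSpace ℝ (Fin n)) :=
  {x | (2:ℝ)^k ≤ ‖x‖ ∧ ‖x‖ < (2:ℝ)^(k+1)}

lemma measurableSet_shell (n : ℕ) (k : ℤ) : MeasurableSet (Shell n k) := by
  have : Shell n k =
      (fun x : EuclideanSpace ℝ (Fin n) => ‖x‖) ⁻¹' (Ico ((2:ℝ)^k) ((2:ℝ)^(k+1))) := rfl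
  rw [this]
  exact measurable_norm measurableSet_Ico

lemma shell_norm_pos {n : ℕ} {k : ℤ} {x : EuclideanSpace ℝ (Fin n)} (hx : x ∈ Shell n k) :
    0 < ‖x‖ := lt_of_lt_of_le (zpow_pos two_pos k) hx.1

lemma shell_disj (n : ℕ) : Pairwise (Function.onFun Disjoint (Shell n)) := by
  have key : ∀ k l : ℤ, k < l → Disjoint (Shell n k) (Shell n l) := by
    intro k l hkl
    rw [Set.disjoint_left]
    rintro x ⟨_, hx2⟩ ⟨hx3, _⟩
    have h2 : (2:ℝ)^(k+1) ≤ (2:ℝ)^l := zpow_le_zpow_right₀ one_le_two (by omega)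
    linarith
  intro k l hkl
  rcases lt_or_gt_of_ne hkl with h | h
  · exact key k l h
  · exact (key l k h).symm

lemma shell_cover {n : ℕ} {x : EuclideanSpace ℝ (Fin n)} (hx : x ≠ 0) :
    ∃ k : ℤ, x ∈ Shell n k := by
  have h0 : 0 < ‖x‖ := norm_pos_iff.2 hx
  obtain ⟨k, hk⟩ := exists_mem_Ico_zpow h0 one_lt_two
  exact ⟨k, hk.1, hk.2⟩

lemma weight_bound {n : ℕ} {k : ℤ} {x : EuclideanSpace ℝ (Fin n)} (c : ℝ) (hx : x ∈ Shell n k) :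
    ENNReal.ofReal (‖x‖ ^ c) ≤ e2 ((k:ℝ) * c + |c|) := by
  rw [← ofReal_two_rpow]
  apply ENNReal.ofReal_le_ofReal
  rcases le_or_gt 0 c with hc | hc
  · calc ‖x‖ ^ c ≤ ((2:ℝ)^(k+1)) ^ c := Real.rpow_le_rpow (norm_nonneg x) hx.2.le hc
      _ = (2:ℝ) ^ (((k:ℝ)+1) * c) := by
          rw [Real.rpow_mul (by norm_num), ← Real.rpow_intCast 2 (k+1)]
          push_cast
          ring_nf
      _ ≤ (2:ℝ) ^ ((k:ℝ) * c + |c|) :=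
          Real.rpow_le_rpow_of_exponent_le one_le_two
            (by have := le_abs_self c; nlinarith)
  · calc ‖x‖ ^ c ≤ ((2:ℝ)^k) ^ c :=
          Real.rpow_le_rpow_of_nonpos (zpow_pos two_pos k) hx.1 hc.le
      _ = (2:ℝ) ^ ((k:ℝ) * c) := by
          rw [Real.rpow_mul (by norm_num), ← Real.rpow_intCast 2 k]
      _ ≤ (2:ℝ) ^ ((k:ℝ) * c + |c|) :=
          Real.rpow_le_rpow_of_exponent_le one_le_two (by have := abs_nonneg c; linarith)

lemma shell_vol (n : ℕ) (k : ℤ) :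
    volume (Shell n k) ≤ e2 (((k:ℝ) + 1) * n) * volume (ball (0:EuclideanSpace ℝ (Fin n)) 1) := by
  have hsub : Shell n k ⊆ ball (0:EuclideanSpace ℝ (Fin n)) ((2:ℝ)^(k+1)) := by
    intro x hx
    rw [mem_ball_zero_iff]
    exact hx.2
  calc volume (Shell n k) ≤ volume (ball (0:EuclideanSpace ℝ (Fin n)) ((2:ℝ)^(k+1))) :=
        measure_mono hsub
    _ = ENNReal.ofReal (((2:ℝ)^(k+1)) ^ Module.finrank ℝ (EuclideanSpace ℝ (Fin n)))
          * volume (ball (0:EuclideanSpace ℝ (Fin n)) 1) :=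
        Measure.addHaar_ball_of_pos _ _ (zpow_pos two_pos _)
    _ = e2 (((k:ℝ) + 1) * n) * volume (ball (0:EuclideanSpace ℝ (Fin n)) 1) := by
        congr 1
        rw [finrank_euclideanSpace_fin, ← zpow_natCast ((2:ℝ)^(k+1)) n, ← zpow_mul,
          ← Real.rpow_intCast 2 ((k+1)*n), ofReal_two_rpow]
        push_cast
        ring_nf

lemma shell_weight (n : ℕ) (c : ℝ) (k : ℤ) :
    ∫⁻ x in Shell n k, ENNReal.ofReal (‖x‖ ^ c) ≤
      e2 ((k:ℝ) * (c + n)) * (e2 (|c| + n) * volume (ball (0:EuclideanSpace ℝ (Fin n)) 1)) := by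
  calc ∫⁻ x in Shell n k, ENNReal.ofReal (‖x‖ ^ c)
      ≤ ∫⁻ _ in Shell n k, e2 ((k:ℝ) * c + |c|) :=
        setLIntegral_mono measurable_const fun x hx => weight_bound c hx
    _ = e2 ((k:ℝ) * c + |c|) * volume (Shell n k) := setLIntegral_const _ _
    _ ≤ e2 ((k:ℝ) * c + |c|) * (e2 (((k:ℝ) + 1) * n) * volume (ball (0:EuclideanSpace ℝ (Fin n)) 1)) :=
        mul_le_mul_right (shell_vol n k) _
    _ = e2 ((k:ℝ) * (c + n)) * (e2 (|c| + n) * volume (ball (0:EuclideanSpace ℝ (Fin n)) 1)) := by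
        rw [← mul_assoc, ← e2_add, ← mul_assoc, ← e2_add]
        congr 2
        ring

lemma vol_zero (n : ℕ) (hn : 1 ≤ n) : volume ({0} : Set (EuclideanSpace ℝ (Fin n))) = 0 := by
  haveI : Nonempty (Fin n) := ⟨⟨0, hn⟩⟩
  exact measure_singleton 0

lemma shell_holder (n : ℕ) {p α : ℝ} (hp : 1 < p) :
    ∃ C : ENNReal, C ≠ ⊤ ∧ ∀ (u : EuclideanSpace ℝ (Fin n) → ENNReal), Measurable u → ∀ k : ℤ,
      ∫⁻ y in Shell n k, u y ≤
        C * e2 ((k:ℝ) * ((n * (p-1) - α)/p)) *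
          (∫⁻ y in Shell n k, u y ^ p * ENNReal.ofReal (‖y‖ ^ α)) ^ (1/p) := by
  have hp0 : (0:ℝ) < p := by linarith
  set p' := p / (p - 1) with hp'def
  have hconj : p.HolderConjugate p' := Real.HolderConjugate.conjExponent hp
  have hp'0 : (0:ℝ) < p' := hconj.symm.pos
  set c0 : ℝ := α * (-(1/p) * p') with hc0
  set V := volume (ball (0:EuclideanSpace ℝ (Fin n)) 1) with hV
  refine ⟨(e2 (|c0| + n) * V) ^ (1/p'), ?_, ?_⟩
  · exact ENNReal.rpow_ne_top_of_nonneg (by positivity)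
      (ENNReal.mul_ne_top (e2_ne_top _) measure_ball_lt_top.ne)
  intro u hu k
  set w : EuclideanSpace ℝ (Fin n) → ENNReal := fun y => ENNReal.ofReal (‖y‖ ^ α) with hw
  have hwm : Measurable w := ENNReal.measurable_ofReal.comp (measurable_norm.pow_const _)
  have hexp : (c0 + n) * (1/p') = (n * (p-1) - α)/p := by
    rw [hc0, hp'def]
    have h1 : p - 1 ≠ 0 := by linarith
    field_simp
    ring
  have hsplit : ∀ y ∈ Shell n k, u y = (u y * w y ^ (1/p)) * (w y ^ (-(1/p))) := by
    intro y hy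
    have h1 : (0:ℝ) < ‖y‖ ^ α := Real.rpow_pos_of_pos (shell_norm_pos hy) α
    have hw0 : w y ≠ 0 := (ENNReal.ofReal_pos.2 h1).ne'
    have hwt : w y ≠ ⊤ := ENNReal.ofReal_ne_top
    rw [mul_assoc, ← ENNReal.rpow_add _ _ hw0 hwt]
    norm_num
  have hfst : ∫⁻ y in Shell n k, (u y * w y ^ (1/p)) ^ p
      = ∫⁻ y in Shell n k, u y ^ p * w y := by
    refine lintegral_congr fun y => ?_
    rw [ENNReal.mul_rpow_of_nonneg _ _ hp0.le, ← ENNReal.rpow_mul,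
      one_div_mul_cancel hp0.ne', ENNReal.rpow_one]
  have hsnd : ∫⁻ y in Shell n k, (w y ^ (-(1/p))) ^ p'
      = ∫⁻ y in Shell n k, ENNReal.ofReal (‖y‖ ^ c0) := by
    refine setLIntegral_congr_fun (measurableSet_shell n k) (fun y hy => ?_)
    have h0 : (0:ℝ) < ‖y‖ := shell_norm_pos hy
    have h1 : (0:ℝ) < ‖y‖ ^ α := Real.rpow_pos_of_pos h0 α
    rw [hw, ← ENNReal.rpow_mul, ENNReal.ofReal_rpow_of_pos h1,
      ← Real.rpow_mul (norm_nonneg y), ← hc0]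
  calc ∫⁻ y in Shell n k, u y
      = ∫⁻ y in Shell n k, (fun y => u y * w y ^ (1/p)) y * (fun y => w y ^ (-(1/p))) y :=
        setLIntegral_congr_fun (measurableSet_shell n k) hsplit
    _ ≤ (∫⁻ y in Shell n k, (u y * w y ^ (1/p)) ^ p) ^ (1/p)
          * (∫⁻ y in Shell n k, (w y ^ (-(1/p))) ^ p') ^ (1/p') :=
        ENNReal.lintegral_mul_le_Lp_mul_Lq _ hconj
          (hu.mul (hwm.pow_const _)).aemeasurable (hwm.pow_const _).aemeasurable
    _ ≤ ((∫⁻ y in Shell n k, u y ^ p * w y) ^ (1/p))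
          * ((e2 ((k:ℝ) * (c0 + n)) * (e2 (|c0| + n) * V)) ^ (1/p')) := by
        rw [hfst, hsnd]
        exact mul_le_mul_right (ENNReal.rpow_le_rpow (shell_weight n c0 k) (by positivity)) _
    _ = (e2 (|c0| + n) * V) ^ (1/p') * e2 ((k:ℝ) * ((n * (p-1) - α)/p))
          * (∫⁻ y in Shell n k, u y ^ p * w y) ^ (1/p) := by
        rw [ENNReal.mul_rpow_of_nonneg _ _ (by positivity : (0:ℝ) ≤ 1/p'), e2_rpow]
        rw [show (k:ℝ) * (c0 + n) * (1/p') = (k:ℝ) * ((n * (p-1) - α)/p) by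
          rw [mul_assoc, hexp]]
        ring
theorem hardy_euclidean (n : ℕ) (hn : 1 ≤ n) (p q α β : ℝ) (hp : 1 < p) (hpq : p ≤ q)
    (hα : α < n * (p - 1)) (hrel : q * (α + n) - p * (β + n) = p * q * n) :
    ∃ C : ENNReal, C ≠ ⊤ ∧ ∀ u : EuclideanSpace ℝ (Fin n) → ENNReal, Measurable u →
      (∫⁻ x : EuclideanSpace ℝ (Fin n), (∫⁻ y in {y : EuclideanSpace ℝ (Fin n) | ‖y‖ < ‖x‖}, u y) ^ q * ENNReal.ofReal (‖x‖ ^ β)) ^ (1/q)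
        ≤ C * (∫⁻ x, u x ^ p * ENNReal.ofReal (‖x‖ ^ α)) ^ (1/p) := by
  have hp0 : (0:ℝ) < p := by linarith
  have hq0 : (0:ℝ) < q := by linarith
  set σ : ℝ := (n * (p - 1) - α)/p with hσdef
  have hσ : 0 < σ := div_pos (by linarith) hp0
  set p' := p / (p - 1) with hp'def
  have hconj : p.HolderConjugate p' := Real.HolderConjugate.conjExponent hp
  have hp'0 : (0:ℝ) < p' := hconj.symm.pos
  have hs1 : (1:ℝ) ≤ q / p := (one_le_div hp0).2 hpq
  have hβn : β + (n:ℝ) = -(σ * q) := by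
    have h1 : σ * p = n * (p - 1) - α := by rw [hσdef]; field_simp
    have h2 : p * (β + n) = p * (-(σ * q)) := by linear_combination q * h1 - hrel
    exact mul_left_cancel₀ hp0.ne' h2
  set V := volume (ball (0:EuclideanSpace ℝ (Fin n)) 1) with hV
  have hVt : V ≠ ⊤ := measure_ball_lt_top.ne
  obtain ⟨C1, hC1, hA⟩ := shell_holder n (α := α) hp
  rw [← hσdef] at hA
  obtain ⟨K, hK, hJ⟩ := jensen_aux (s := q/p) (δ := σ*q/4) hs1 (by positivity)
  set G1 : ENNReal := ∑' j : ℕ, e2 ((j:ℝ) * (-(σ * p' / 2))) with hG1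
  have hG1t : G1 ≠ ⊤ := tsum_e2_ne_top (by nlinarith)
  set G2 : ENNReal := ∑' j : ℕ, e2 ((j:ℝ) * (-(σ * q / 4))) with hG2
  have hG2t : G2 ≠ ⊤ := tsum_e2_ne_top (by nlinarith)
  set D : ENNReal := C1 ^ q * G1 ^ (q/p') * K * V * e2 (|β| + n) with hD
  have hDt : D ≠ ⊤ := by
    refine ENNReal.mul_ne_top (ENNReal.mul_ne_top (ENNReal.mul_ne_top (ENNReal.mul_ne_top
      (ENNReal.rpow_ne_top_of_nonneg hq0.le hC1)
      (ENNReal.rpow_ne_top_of_nonneg (by positivity) hG1t)) hK) hVt) (e2_ne_top _)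
  refine ⟨(D * G2) ^ (1/q), ENNReal.rpow_ne_top_of_nonneg (by positivity)
    (ENNReal.mul_ne_top hDt hG2t), ?_⟩
  intro u hu
  set B : ℤ → ENNReal := fun k => ∫⁻ y in Shell n k, u y ^ p * ENNReal.ofReal (‖y‖ ^ α)
    with hBdef
  set A : ℤ → ENNReal := fun k => ∫⁻ y in Shell n k, u y with hAdef
  set X : ℤ → ENNReal := fun m => ∑' j : ℕ, B (m - j) * e2 (((m:ℝ) - j) * (σ*p/2)) with hXdef
  set RHSint := ∫⁻ x, u x ^ p * ENNReal.ofReal (‖x‖ ^ α) with hRHS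
  -- Step 2 : discrete Hölder
  have hstep2 : ∀ m : ℤ, (∑' j : ℕ, A (m - j)) ≤
      C1 * (e2 ((m:ℝ) * (σ/2)) * G1 ^ (1/p')) * (X m) ^ (1/p) := by
    intro m
    have h1 : ∀ j : ℕ, A (m - j) ≤ C1 * ((B (m - j) ^ (1/p) * e2 (((m:ℝ) - j) * (σ/2)))
        * e2 (((m:ℝ) - j) * (σ/2))) := by
      intro j
      refine (hA u hu (m - j)).trans (le_of_eq ?_)
      have he : e2 (((m:ℝ) - j) * (σ/2)) * e2 (((m:ℝ) - j) * (σ/2))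
          = e2 (((m - j : ℤ):ℝ) * σ) := by
        rw [← e2_add]; congr 1; push_cast; ring
      calc C1 * e2 (((m - j : ℤ):ℝ) * σ) * B (m - j) ^ (1/p)
          = C1 * (e2 (((m:ℝ) - j) * (σ/2)) * e2 (((m:ℝ) - j) * (σ/2))) * B (m - j) ^ (1/p) := by
            rw [he]
        _ = C1 * ((B (m - j) ^ (1/p) * e2 (((m:ℝ) - j) * (σ/2))) * e2 (((m:ℝ) - j) * (σ/2))) := by
            ring
    calc ∑' j : ℕ, A (m - j)
        ≤ ∑' j : ℕ, C1 * ((B (m - j) ^ (1/p) * e2 (((m:ℝ) - j) * (σ/2)))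
            * e2 (((m:ℝ) - j) * (σ/2))) := ENNReal.tsum_le_tsum h1
      _ = C1 * ∑' j : ℕ, (B (m - j) ^ (1/p) * e2 (((m:ℝ) - j) * (σ/2)))
            * e2 (((m:ℝ) - j) * (σ/2)) := ENNReal.tsum_mul_left
      _ ≤ C1 * ((∑' j : ℕ, (B (m - j) ^ (1/p) * e2 (((m:ℝ) - j) * (σ/2))) ^ p) ^ (1/p)
            * (∑' j : ℕ, (e2 (((m:ℝ) - j) * (σ/2))) ^ p') ^ (1/p')) :=
          mul_le_mul_right (tsum_holder hconj _ _) _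
      _ = C1 * ((X m) ^ (1/p) * (e2 ((m:ℝ) * (σ/2)) * G1 ^ (1/p'))) := by
          congr 2
          · congr 1
            refine tsum_congr fun j => ?_
            rw [ENNReal.mul_rpow_of_nonneg _ _ hp0.le, ← ENNReal.rpow_mul,
              one_div_mul_cancel hp0.ne', ENNReal.rpow_one, e2_rpow]
            congr 2
            ring
          · rw [show (∑' j : ℕ, (e2 (((m:ℝ) - j) * (σ/2))) ^ p')
                = e2 ((m:ℝ) * (σ * p' / 2)) * G1 from ?_]
            · rw [ENNReal.mul_rpow_of_nonneg _ _ (by positivity : (0:ℝ) ≤ 1/p'), e2_rpow]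
              congr 2
              field_simp
            · rw [hG1, ← ENNReal.tsum_mul_left]
              refine tsum_congr fun j => ?_
              rw [e2_rpow, ← e2_add]
              congr 1
              ring
      _ = C1 * (e2 ((m:ℝ) * (σ/2)) * G1 ^ (1/p')) * (X m) ^ (1/p) := by ring
  -- Step 3 : raise to the power q
  have hstep3 : ∀ m : ℤ, (∑' j : ℕ, A (m - j)) ^ q
      ≤ C1 ^ q * G1 ^ (q/p') * e2 ((m:ℝ) * (σ*q/2)) * (X m) ^ (q/p) := by
    intro m
    refine (ENNReal.rpow_le_rpow (hstep2 m) hq0.le).trans (le_of_eq ?_)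
    rw [ENNReal.mul_rpow_of_nonneg _ _ hq0.le, ENNReal.mul_rpow_of_nonneg _ _ hq0.le,
      ENNReal.mul_rpow_of_nonneg _ _ hq0.le, ← ENNReal.rpow_mul, ← ENNReal.rpow_mul, e2_rpow]
    rw [show (1/p')*q = q/p' by ring, show (1/p)*q = q/p by ring,
      show (m:ℝ)*(σ/2)*q = (m:ℝ)*(σ*q/2) by ring]
    ring
  -- Step 4 : Jensen
  have hstep4 : ∀ m : ℤ, (X m) ^ (q/p)
      ≤ K * ∑' j : ℕ, B (m - j) ^ (q/p) * e2 (((m:ℝ) - j)*(σ*q/2) + (j:ℝ)*(σ*q/4)) := by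
    intro m
    refine (hJ (fun j => B (m - j) * e2 (((m:ℝ) - j) * (σ*p/2)))).trans ?_
    refine mul_le_mul_right (le_of_eq (tsum_congr fun j => ?_)) _
    rw [ENNReal.mul_rpow_of_nonneg _ _ (by positivity : (0:ℝ) ≤ q/p), e2_rpow,
      mul_assoc, ← e2_add]
    congr 2
    field_simp
  -- Step 1/5 : pointwise bound of the inner integral on a shell, and shell integral bound
  have hFb : ∀ m : ℤ, ∀ x ∈ Shell n m,
      (∫⁻ y in {y : EuclideanSpace ℝ (Fin n) | ‖y‖ < ‖x‖}, u y) ≤ ∑' j : ℕ, A (m - j) := by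
    intro m x hx
    have hsub : {y : EuclideanSpace ℝ (Fin n) | ‖y‖ < ‖x‖}
        ⊆ {0} ∪ ⋃ j : ℕ, Shell n (m - j) := by
      intro y hy
      by_cases h0 : y = 0
      · exact Or.inl (by simp [h0])
      · obtain ⟨k, hk⟩ := shell_cover h0
        have hkm : k < m + 1 := by
          have h1 : (2:ℝ)^k < (2:ℝ)^(m+1) := lt_of_le_of_lt hk.1 (lt_trans hy hx.2)
          exact (zpow_lt_zpow_iff_right₀ one_lt_two).1 h1
        refine Or.inr (mem_iUnion.2 ⟨(m - k).toNat, ?_⟩)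
        have hmk : m - ((m - k).toNat : ℤ) = k := by omega
        rw [hmk]; exact hk
    calc ∫⁻ y in {y : EuclideanSpace ℝ (Fin n) | ‖y‖ < ‖x‖}, u y
        ≤ ∫⁻ y in {0} ∪ ⋃ j : ℕ, Shell n (m - j), u y := lintegral_mono_set hsub
      _ ≤ (∫⁻ y in ({0} : Set (EuclideanSpace ℝ (Fin n))), u y)
            + ∫⁻ y in ⋃ j : ℕ, Shell n (m - j), u y := lintegral_union_le _ _ _
      _ ≤ 0 + ∑' j : ℕ, A (m - j) :=
          add_le_add (le_of_eq (setLIntegral_measure_zero _ _ (vol_zero n hn)))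
            (lintegral_iUnion_le _ _)
      _ = ∑' j : ℕ, A (m - j) := zero_add _
  have hshell : ∀ m : ℤ,
      (∫⁻ x in Shell n m,
        (∫⁻ y in {y : EuclideanSpace ℝ (Fin n) | ‖y‖ < ‖x‖}, u y) ^ q
          * ENNReal.ofReal (‖x‖ ^ β))
      ≤ (∑' j : ℕ, A (m - j)) ^ q * e2 ((m:ℝ)*β + |β|) * (e2 (((m:ℝ)+1)*n) * V) := by
    intro m
    calc ∫⁻ x in Shell n m,
          (∫⁻ y in {y : EuclideanSpace ℝ (Fin n) | ‖y‖ < ‖x‖}, u y) ^ q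
            * ENNReal.ofReal (‖x‖ ^ β)
        ≤ ∫⁻ _ in Shell n m, (∑' j : ℕ, A (m - j)) ^ q * e2 ((m:ℝ)*β + |β|) :=
          setLIntegral_mono measurable_const fun x hx =>
            mul_le_mul' (ENNReal.rpow_le_rpow (hFb m x hx) hq0.le) (weight_bound β hx)
      _ = (∑' j : ℕ, A (m - j)) ^ q * e2 ((m:ℝ)*β + |β|) * volume (Shell n m) :=
          setLIntegral_const _ _
      _ ≤ (∑' j : ℕ, A (m - j)) ^ q * e2 ((m:ℝ)*β + |β|) * (e2 (((m:ℝ)+1)*n) * V) :=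
          mul_le_mul_right (shell_vol n m) _
  -- Step 6 : per-shell term bound
  have hterm : ∀ m : ℤ,
      (∑' j : ℕ, A (m - j)) ^ q * e2 ((m:ℝ)*β + |β|) * (e2 (((m:ℝ)+1)*n) * V)
      ≤ D * ∑' j : ℕ, B (m - j) ^ (q/p) * e2 ((j:ℝ) * (-(σ*q/4))) := by
    intro m
    have h1 : (∑' j : ℕ, A (m - j)) ^ q
        ≤ C1 ^ q * G1 ^ (q/p') * e2 ((m:ℝ) * (σ*q/2))
          * (K * ∑' j : ℕ, B (m - j) ^ (q/p) * e2 (((m:ℝ) - j)*(σ*q/2) + (j:ℝ)*(σ*q/4))) :=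
      (hstep3 m).trans (mul_le_mul_right (hstep4 m) _)
    refine (mul_le_mul_left (mul_le_mul_left h1 _) _).trans (le_of_eq ?_)
    have hsc : ∀ j : ℕ, e2 ((m:ℝ) * (σ*q/2)) * e2 ((m:ℝ)*β + |β|) * e2 (((m:ℝ)+1)*n)
        * e2 (((m:ℝ) - j)*(σ*q/2) + (j:ℝ)*(σ*q/4)) = e2 (|β| + n) * e2 ((j:ℝ) * (-(σ*q/4))) := by
      intro j
      rw [← e2_add, ← e2_add, ← e2_add, ← e2_add]
      congr 1
      linear_combination (m:ℝ) * hβn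
    calc C1 ^ q * G1 ^ (q/p') * e2 ((m:ℝ) * (σ*q/2))
          * (K * ∑' j : ℕ, B (m - j) ^ (q/p) * e2 (((m:ℝ) - j)*(σ*q/2) + (j:ℝ)*(σ*q/4)))
          * e2 ((m:ℝ)*β + |β|) * (e2 (((m:ℝ)+1)*n) * V)
        = C1 ^ q * G1 ^ (q/p') * K * V *
            ∑' j : ℕ, (e2 ((m:ℝ) * (σ*q/2)) * e2 ((m:ℝ)*β + |β|) * e2 (((m:ℝ)+1)*n))
              * (B (m - j) ^ (q/p) * e2 (((m:ℝ) - j)*(σ*q/2) + (j:ℝ)*(σ*q/4))) := by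
          rw [ENNReal.tsum_mul_left (a := e2 ((m:ℝ) * (σ*q/2)) * e2 ((m:ℝ)*β + |β|)
            * e2 (((m:ℝ)+1)*n))]
          ring
      _ = C1 ^ q * G1 ^ (q/p') * K * V *
            ∑' j : ℕ, e2 (|β| + n) * (B (m - j) ^ (q/p) * e2 ((j:ℝ) * (-(σ*q/4)))) := by
          congr 1
          refine tsum_congr fun j => ?_
          calc (e2 ((m:ℝ) * (σ*q/2)) * e2 ((m:ℝ)*β + |β|) * e2 (((m:ℝ)+1)*n))
                * (B (m - j) ^ (q/p) * e2 (((m:ℝ) - j)*(σ*q/2) + (j:ℝ)*(σ*q/4)))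
              = B (m - j) ^ (q/p) * (e2 ((m:ℝ) * (σ*q/2)) * e2 ((m:ℝ)*β + |β|)
                  * e2 (((m:ℝ)+1)*n) * e2 (((m:ℝ) - j)*(σ*q/2) + (j:ℝ)*(σ*q/4))) := by ring
            _ = B (m - j) ^ (q/p) * (e2 (|β| + n) * e2 ((j:ℝ) * (-(σ*q/4)))) := by rw [hsc j]
            _ = e2 (|β| + n) * (B (m - j) ^ (q/p) * e2 ((j:ℝ) * (-(σ*q/4)))) := by ring
      _ = D * ∑' j : ℕ, B (m - j) ^ (q/p) * e2 ((j:ℝ) * (-(σ*q/4))) := by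
          rw [ENNReal.tsum_mul_left (a := e2 (|β| + n)), hD]
          ring
  -- Step 7 : sum over shells
  have hLHS : (∫⁻ x : EuclideanSpace ℝ (Fin n),
      (∫⁻ y in {y : EuclideanSpace ℝ (Fin n) | ‖y‖ < ‖x‖}, u y) ^ q
        * ENNReal.ofReal (‖x‖ ^ β))
      ≤ D * (RHSint ^ (q/p) * G2) := by
    have hcover : (univ : Set (EuclideanSpace ℝ (Fin n))) ⊆ {0} ∪ ⋃ m : ℤ, Shell n m := by
      intro x _
      by_cases hx : x = 0
      · exact Or.inl (by simp [hx])
      · exact Or.inr (mem_iUnion.2 (shell_cover hx))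
    have hBsum : ∑' k : ℤ, B k ≤ RHSint := by
      rw [hBdef]
      have := (lintegral_iUnion (μ := volume) (measurableSet_shell n) (shell_disj n)
        (fun y => u y ^ p * ENNReal.ofReal (‖y‖ ^ α))).symm
      refine this.le.trans ?_
      rw [hRHS, ← setLIntegral_univ (μ := volume) (fun x => u x ^ p * ENNReal.ofReal (‖x‖ ^ α))]
      exact lintegral_mono_set (subset_univ _)
    calc ∫⁻ x : EuclideanSpace ℝ (Fin n),
          (∫⁻ y in {y : EuclideanSpace ℝ (Fin n) | ‖y‖ < ‖x‖}, u y) ^ q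
            * ENNReal.ofReal (‖x‖ ^ β)
        = ∫⁻ x in univ,
            (∫⁻ y in {y : EuclideanSpace ℝ (Fin n) | ‖y‖ < ‖x‖}, u y) ^ q
              * ENNReal.ofReal (‖x‖ ^ β) := (setLIntegral_univ _).symm
      _ ≤ ∫⁻ x in {0} ∪ ⋃ m : ℤ, Shell n m,
            (∫⁻ y in {y : EuclideanSpace ℝ (Fin n) | ‖y‖ < ‖x‖}, u y) ^ q
              * ENNReal.ofReal (‖x‖ ^ β) := lintegral_mono_set hcover
      _ ≤ (∫⁻ x in ({0} : Set (EuclideanSpace ℝ (Fin n))),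
            (∫⁻ y in {y : EuclideanSpace ℝ (Fin n) | ‖y‖ < ‖x‖}, u y) ^ q
              * ENNReal.ofReal (‖x‖ ^ β))
          + ∫⁻ x in ⋃ m : ℤ, Shell n m,
              (∫⁻ y in {y : EuclideanSpace ℝ (Fin n) | ‖y‖ < ‖x‖}, u y) ^ q
                * ENNReal.ofReal (‖x‖ ^ β) := lintegral_union_le _ _ _
      _ ≤ 0 + ∑' m : ℤ, ∫⁻ x in Shell n m,
            (∫⁻ y in {y : EuclideanSpace ℝ (Fin n) | ‖y‖ < ‖x‖}, u y) ^ q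
              * ENNReal.ofReal (‖x‖ ^ β) :=
          add_le_add (le_of_eq (setLIntegral_measure_zero _ _ (vol_zero n hn)))
            (lintegral_iUnion_le _ _)
      _ ≤ ∑' m : ℤ, D * ∑' j : ℕ, B (m - j) ^ (q/p) * e2 ((j:ℝ) * (-(σ*q/4))) := by
          rw [zero_add]
          exact ENNReal.tsum_le_tsum fun m => (hshell m).trans (hterm m)
      _ = D * ∑' j : ℕ, ∑' m : ℤ, B (m - j) ^ (q/p) * e2 ((j:ℝ) * (-(σ*q/4))) := by
          rw [ENNReal.tsum_mul_left, ENNReal.tsum_comm]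
      _ = D * ∑' j : ℕ, (∑' k : ℤ, B k ^ (q/p)) * e2 ((j:ℝ) * (-(σ*q/4))) := by
          congr 1
          refine tsum_congr fun j => ?_
          rw [ENNReal.tsum_mul_right]
          congr 1
          exact Equiv.tsum_eq (Equiv.subRight (j:ℤ)) (fun k => B k ^ (q/p))
      _ = D * ((∑' k : ℤ, B k ^ (q/p)) * G2) := by rw [ENNReal.tsum_mul_left, hG2]
      _ ≤ D * (RHSint ^ (q/p) * G2) := by
          refine mul_le_mul_right (mul_le_mul_left ?_ _) _
          exact (tsum_rpow_le hs1 B).trans (ENNReal.rpow_le_rpow hBsum (by positivity))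
  -- conclusion
  refine (ENNReal.rpow_le_rpow hLHS (by positivity : (0:ℝ) ≤ 1/q)).trans (le_of_eq ?_)
  rw [show D * (RHSint ^ (q/p) * G2) = (D * G2) * RHSint ^ (q/p) by ring,
    ENNReal.mul_rpow_of_nonneg _ _ (by positivity : (0:ℝ) ≤ 1/q), ← ENNReal.rpow_mul]
  rw [show q/p * (1/q) = 1/p by
    field_simp]
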